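/- arXiv:2310.18637 — 2 statements merged into one kernel-verified Lean document; each statement's English description precedes it below -/
import Mathlib

section
/- The Poisson distribution is determined by its moments: if a Borel probability measure ν on ℝ has the same moments of all orders as the Poisson distribution with parameter λ, then ν equals that Poisson distribution. -/
open MeasureTheory ProbabilityTheory
open scoped NNReal

section StmtNineAux

open Real Filter
open scoped ENNReal Nat Topology



noncomputable section A1

private lemma hasSum_exp' (x : ℝ) : HasSum (fun n => x ^ n / n !) (Real.exp x) := by
  rw [Real.exp_eq_exp_ℝ]
  exact NormedSpace.expSeries_div_hasSum_exp x

private lemma pow_div_factorial_le_exp {x : ℝ} (hx : 0 ≤ x) (k : ℕ) :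
    x ^ k / k ! ≤ Real.exp x :=
  le_hasSum (hasSum_exp' x) k fun j _ => by positivity

private lemma factorial_two_mul_le' (k : ℕ) : (((2 * k)! : ℕ) : ℝ) ≤ 4 ^ k * ((k ! : ℕ) : ℝ) ^ 2 := by
  have h1 : (2 * k).choose k * (k ! * k !) = (2 * k)! := by
    have h := Nat.choose_mul_factorial_mul_factorial (show k ≤ 2 * k by omega)
    have h2 : 2 * k - k = k := by omega
    rw [h2] at h
    rw [← h]; ring
  have h2 : (2 * k).choose k ≤ 4 ^ k := by
    calc (2 * k).choose k ≤ ∑ m ∈ Finset.range (2 * k + 1), (2 * k).choose m :=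
          Finset.single_le_sum (fun m _ => Nat.zero_le _) (by simp; omega)
      _ = 2 ^ (2 * k) := Nat.sum_range_choose _
      _ = 4 ^ k := by rw [pow_mul]; norm_num
  have := Nat.mul_le_mul_right (k ! * k !) h2
  rw [h1] at this
  calc (((2 * k)! : ℕ) : ℝ) ≤ ((4 ^ k * (k ! * k !) : ℕ) : ℝ) := by exact_mod_cast this
    _ = 4 ^ k * ((k ! : ℕ) : ℝ) ^ 2 := by push_cast; ring

private lemma integrable_nat_of_summable {m : Measure ℕ} {f : ℕ → ℝ}
    (h : Summable fun n => |f n| * (m {n}).toReal) [IsFiniteMeasure m] :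
    Integrable f m := by
  refine ⟨measurable_from_nat.aestronglyMeasurable, ?_⟩
  rw [HasFiniteIntegral, lintegral_countable']
  have hterm : ∀ n : ℕ, ‖f n‖ₑ * m {n} = ENNReal.ofReal (|f n| * (m {n}).toReal) := by
    intro n
    rw [ENNReal.ofReal_mul (abs_nonneg _), ← ofReal_norm, Real.norm_eq_abs,
      ENNReal.ofReal_toReal (measure_ne_top m _)]
  simp_rw [hterm]
  rw [← ENNReal.ofReal_tsum_of_nonneg (fun n => mul_nonneg (abs_nonneg _) ENNReal.toReal_nonneg) h]
  exact ENNReal.ofReal_lt_top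

private lemma series_integral {ρ : Measure ℝ} [IsProbabilityMeasure ρ] {a : ℕ → ℝ} {f : ℝ → ℝ}
    (hmeas : AEStronglyMeasurable f ρ)
    (hint : ∀ n, Integrable (fun x => |x| ^ n) ρ)
    (hsum : Summable fun n => |a n| * ∫ x, |x| ^ n ∂ρ)
    (hf : ∀ x, HasSum (fun n => a n * x ^ n) (f x)) :
    Integrable f ρ ∧ ∫ x, f x ∂ρ = ∑' n, a n * ∫ x, x ^ n ∂ρ := by
  have hmeasn : ∀ n : ℕ, AEStronglyMeasurable (fun x : ℝ => a n * x ^ n) ρ :=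
    fun n => (continuous_const.mul (continuous_pow n)).aestronglyMeasurable
  have habs : ∀ n, Integrable (fun x : ℝ => |a n| * |x| ^ n) ρ := fun n => (hint n).const_mul _
  have hln : ∀ n, ∫⁻ x, ‖a n * x ^ n‖₊ ∂ρ = ENNReal.ofReal (|a n| * ∫ x, |x| ^ n ∂ρ) := by
    intro n
    rw [← integral_const_mul, ofReal_integral_eq_lintegral_ofReal (habs n)
      (ae_of_all _ fun x => by positivity)]
    refine lintegral_congr fun x => ?_
    rw [← enorm_eq_nnnorm, ← ofReal_norm, Real.norm_eq_abs, abs_mul, abs_pow]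
  have hne : (∑' n, ∫⁻ x, ‖a n * x ^ n‖₊ ∂ρ) ≠ ∞ := by
    simp_rw [hln]
    rw [← ENNReal.ofReal_tsum_of_nonneg (fun n => mul_nonneg (abs_nonneg _)
      (integral_nonneg fun x => by positivity)) hsum]
    exact ENNReal.ofReal_ne_top
  constructor
  · refine ⟨hmeas, ?_⟩
    rw [HasFiniteIntegral]
    calc ∫⁻ x, ‖f x‖₊ ∂ρ ≤ ∫⁻ x, ∑' n, (‖a n * x ^ n‖₊ : ℝ≥0∞) ∂ρ := by
          refine lintegral_mono fun x => ?_
          have hs0 : Summable fun n => a n * x ^ n := (hf x).summable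
          have hs : Summable fun n => ‖a n * x ^ n‖ :=
            (summable_abs_iff).mpr hs0 |>.congr fun n => (Real.norm_eq_abs _).symm
          have hb : ‖f x‖ ≤ ∑' n, ‖a n * x ^ n‖ := by
            rw [← (hf x).tsum_eq]
            exact norm_tsum_le_tsum_norm hs
          calc (‖f x‖₊ : ℝ≥0∞) = ENNReal.ofReal ‖f x‖ := (ofReal_norm _).symm
            _ ≤ ENNReal.ofReal (∑' n, ‖a n * x ^ n‖) := ENNReal.ofReal_le_ofReal hb
            _ = ∑' n, ENNReal.ofReal ‖a n * x ^ n‖ :=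
                ENNReal.ofReal_tsum_of_nonneg (fun n => norm_nonneg _) hs
            _ = ∑' n, (‖a n * x ^ n‖₊ : ℝ≥0∞) :=
                tsum_congr fun n => ofReal_norm _
      _ = ∑' n, ∫⁻ x, ‖a n * x ^ n‖₊ ∂ρ := lintegral_tsum fun n => (hmeasn n).enorm
      _ < ∞ := hne.lt_top
  · have h1 : ∫ x, f x ∂ρ = ∫ x, ∑' n, a n * x ^ n ∂ρ :=
      integral_congr_ae (ae_of_all _ fun x => ((hf x).tsum_eq).symm)
    rw [h1, integral_tsum hmeasn hne]
    exact tsum_congr fun n => integral_const_mul _ _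

private lemma summable_aux {M : ℕ → ℝ} (hM0 : ∀ n, 0 ≤ M n) {B s t : ℝ} (hB : 0 ≤ B)
    (ht : 0 ≤ t) (hts : t < s) (hMb : ∀ n, M n ≤ B * n ! / s ^ n) {a : ℕ → ℝ}
    (ha : ∀ n, |a n| ≤ t ^ n / n !) :
    Summable fun n => |a n| * M n := by
  have hs : 0 < s := lt_of_le_of_lt ht hts
  have hgeo : Summable fun n : ℕ => B * (t / s) ^ n :=
    (summable_geometric_of_lt_one (by positivity) ((div_lt_one hs).mpr hts)).mul_left B
  refine Summable.of_nonneg_of_le (fun n => mul_nonneg (abs_nonneg _) (hM0 n)) (fun n => ?_) hgeo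
  calc |a n| * M n ≤ (t ^ n / n !) * (B * n ! / s ^ n) :=
        mul_le_mul (ha n) (hMb n) (hM0 n) (by positivity)
    _ = B * (t / s) ^ n := by
        have : ((n ! : ℕ) : ℝ) ≠ 0 := by positivity
        rw [div_pow]
        field_simp

end A1



noncomputable section A2

private lemma hasSum_exp'' (x : ℝ) : HasSum (fun n => x ^ n / n !) (Real.exp x) := by
  rw [Real.exp_eq_exp_ℝ]
  exact NormedSpace.expSeries_div_hasSum_exp x

private lemma pow_div_factorial_le_exp' {x : ℝ} (hx : 0 ≤ x) (k : ℕ) :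
    x ^ k / k ! ≤ Real.exp x :=
  le_hasSum (hasSum_exp'' x) k fun j _ => by positivity


private lemma integrable_nat_of_summable' {m : Measure ℕ} {f : ℕ → ℝ}
    (h : Summable fun n => |f n| * (m {n}).toReal) [IsFiniteMeasure m] :
    Integrable f m := by
  refine ⟨measurable_from_nat.aestronglyMeasurable, ?_⟩
  rw [HasFiniteIntegral, lintegral_countable']
  have hterm : ∀ n : ℕ, ‖f n‖ₑ * m {n} = ENNReal.ofReal (|f n| * (m {n}).toReal) := by
    intro n
    rw [ENNReal.ofReal_mul (abs_nonneg _), ← ofReal_norm, Real.norm_eq_abs,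
      ENNReal.ofReal_toReal (measure_ne_top m _)]
  simp_rw [hterm]
  rw [← ENNReal.ofReal_tsum_of_nonneg (fun n => mul_nonneg (abs_nonneg _) ENNReal.toReal_nonneg) h]
  exact ENNReal.ofReal_lt_top

variable (lam : ℝ≥0)

private lemma pois_sing (n : ℕ) :
    poissonMeasure lam {n} = ENNReal.ofReal (poissonPMFReal lam n) := by
  rw [poissonMeasure_singleton]
  rfl

private lemma pois_sing_toReal (n : ℕ) :
    (poissonMeasure lam {n}).toReal = poissonPMFReal lam n := by
  rw [pois_sing, ENNReal.toReal_ofReal poissonPMFReal_nonneg]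

private lemma pois_hasSum_exp (s : ℝ) :
    HasSum (fun n : ℕ => poissonPMFReal lam n * Real.exp (s * n))
      (Real.exp (-(lam : ℝ)) * Real.exp ((lam : ℝ) * Real.exp s)) := by
  have h := (hasSum_exp'' ((lam : ℝ) * Real.exp s)).mul_left (Real.exp (-(lam : ℝ)))
  have key : (fun n : ℕ => Real.exp (-(lam : ℝ)) * (((lam : ℝ) * Real.exp s) ^ n / n !))
      = fun n : ℕ => poissonPMFReal lam n * Real.exp (s * n) := by
    funext n
    have e1 : (Real.exp s) ^ n = Real.exp (s * n) := by
      rw [← Real.exp_nat_mul, mul_comm]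
    unfold poissonPMFReal
    rw [mul_pow, e1]
    ring
  rwa [key] at h

private lemma pois_int_exp (s : ℝ) :
    Integrable (fun n : ℕ => Real.exp (s * n)) (poissonMeasure lam) := by
  apply integrable_nat_of_summable'
  have h := (pois_hasSum_exp lam s).summable
  refine h.congr fun n => ?_
  rw [pois_sing_toReal, abs_of_nonneg (Real.exp_nonneg _)]
  ring

private lemma pois_int_pow (k : ℕ) :
    Integrable (fun n : ℕ => ((n : ℝ)) ^ k) (poissonMeasure lam) := by
  refine Integrable.mono ((pois_int_exp lam 1).const_mul (k ! : ℝ))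
    measurable_from_nat.aestronglyMeasurable (ae_of_all _ fun n => ?_)
  have h1 : ((n : ℝ)) ^ k ≤ k ! * Real.exp n := by
    have h2 := pow_div_factorial_le_exp' (Nat.cast_nonneg n : (0:ℝ) ≤ n) k
    rw [div_le_iff₀ (by positivity)] at h2
    linarith
  have hk : (0:ℝ) ≤ k ! := by positivity
  simp only [Real.norm_eq_abs, one_mul]
  rw [abs_of_nonneg (pow_nonneg (Nat.cast_nonneg n) k),
    abs_of_nonneg (mul_nonneg hk (Real.exp_nonneg _))]
  exact h1

private lemma pois_summable_pow (k : ℕ) :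
    Summable (fun n : ℕ => poissonPMFReal lam n * (n : ℝ) ^ k) := by
  have hgeo := ((pois_hasSum_exp lam 1).summable).mul_left ((k ! : ℝ))
  refine Summable.of_nonneg_of_le (fun n => mul_nonneg poissonPMFReal_nonneg (by positivity)) (fun n => ?_) hgeo
  have h2 := pow_div_factorial_le_exp' (Nat.cast_nonneg n : (0:ℝ) ≤ n) k
  rw [div_le_iff₀ (by positivity)] at h2
  have hp : 0 ≤ poissonPMFReal lam n := poissonPMFReal_nonneg
  calc poissonPMFReal lam n * (n : ℝ) ^ k ≤ poissonPMFReal lam n * (Real.exp n * k !) :=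
        mul_le_mul_of_nonneg_left h2 hp
    _ = (k ! : ℝ) * (poissonPMFReal lam n * Real.exp (1 * n)) := by rw [one_mul]; ring

private lemma pois_moment_bound {s : ℝ} (hs : 0 < s) (k : ℕ) :
    ∑' n : ℕ, poissonPMFReal lam n * (n : ℝ) ^ k
      ≤ (k ! : ℝ) * Real.exp ((lam : ℝ) * Real.exp s) / s ^ k := by
  have hterm : ∀ n : ℕ, poissonPMFReal lam n * (n : ℝ) ^ k
      ≤ ((k ! : ℝ) / s ^ k) * (poissonPMFReal lam n * Real.exp (s * n)) := by
    intro n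
    have h2 := pow_div_factorial_le_exp' (by positivity : (0:ℝ) ≤ s * n) k
    rw [mul_pow, div_le_iff₀ (by positivity)] at h2
    have h1 : ((n : ℝ)) ^ k ≤ (k ! : ℝ) * Real.exp (s * n) / s ^ k := by
      rw [le_div_iff₀ (by positivity)]
      nlinarith [pow_pos hs k]
    have hp : 0 ≤ poissonPMFReal lam n := poissonPMFReal_nonneg
    calc poissonPMFReal lam n * (n : ℝ) ^ k
        ≤ poissonPMFReal lam n * ((k ! : ℝ) * Real.exp (s * n) / s ^ k) :=
          mul_le_mul_of_nonneg_left h1 hp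
      _ = ((k ! : ℝ) / s ^ k) * (poissonPMFReal lam n * Real.exp (s * n)) := by ring
  calc ∑' n : ℕ, poissonPMFReal lam n * (n : ℝ) ^ k
      ≤ ∑' n : ℕ, ((k ! : ℝ) / s ^ k) * (poissonPMFReal lam n * Real.exp (s * n)) :=
        Summable.tsum_le_tsum hterm (pois_summable_pow lam k)
          (((pois_hasSum_exp lam s).summable).mul_left _)
    _ = ((k ! : ℝ) / s ^ k) * (Real.exp (-(lam:ℝ)) * Real.exp ((lam:ℝ) * Real.exp s)) := by
        rw [tsum_mul_left, (pois_hasSum_exp lam s).tsum_eq]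
    _ ≤ (k ! : ℝ) * Real.exp ((lam : ℝ) * Real.exp s) / s ^ k := by
        have h3 : Real.exp (-(lam:ℝ)) ≤ 1 := Real.exp_le_one_iff.mpr (neg_nonpos.mpr lam.coe_nonneg)
        have h4 : (0:ℝ) < Real.exp ((lam:ℝ) * Real.exp s) := Real.exp_pos _
        have h5 : (0:ℝ) ≤ (k ! : ℝ) / s ^ k := by positivity
        have := mul_le_mul_of_nonneg_left
          (mul_le_of_le_one_left h4.le h3) h5
        calc ((k ! : ℝ) / s ^ k) * (Real.exp (-(lam:ℝ)) * Real.exp ((lam:ℝ) * Real.exp s))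
            ≤ ((k ! : ℝ) / s ^ k) * Real.exp ((lam:ℝ) * Real.exp s) := this
          _ = (k ! : ℝ) * Real.exp ((lam : ℝ) * Real.exp s) / s ^ k := by ring

end A2



noncomputable section A3

private lemma coeff_zero {d : ℕ → ℝ} (hd : Summable fun n => |d n|)
    (h : ∀ u : ℝ, 0 < u → u < 1 → ∑' n, d n * u ^ n = 0) : ∀ n, d n = 0 := by
  intro n
  induction n using Nat.strong_induction_on with
  | _ n ih =>
  set S : ℝ := ∑' m, |d m| with hS
  have hS0 : 0 ≤ S := tsum_nonneg fun m => abs_nonneg _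
  have key : ∀ u : ℝ, 0 < u → u < 1 → |d n| ≤ u * S := by
    intro u hu hu1
    have hu1' : u ≤ 1 := hu1.le
    have hupow : ∀ m : ℕ, u ^ m ≤ 1 := fun m => pow_le_one₀ hu.le hu1'
    have hsum_u : Summable fun m => d m * u ^ m := by
      refine Summable.of_norm_bounded hd fun m => ?_
      rw [Real.norm_eq_abs, abs_mul, abs_pow, abs_of_nonneg hu.le]
      exact mul_le_of_le_one_right (abs_nonneg _) (hupow m)
    have hshift : ∀ j : ℕ, Summable fun i => d (i + j) * u ^ i := by
      intro j
      refine Summable.of_norm_bounded ((summable_nat_add_iff j).mpr hd) fun m => ?_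
      rw [Real.norm_eq_abs, abs_mul, abs_pow, abs_of_nonneg hu.le]
      exact mul_le_of_le_one_right (abs_nonneg _) (hupow m)
    have hsplit := hsum_u.sum_add_tsum_nat_add n
    have hzero : ∑ i ∈ Finset.range n, d i * u ^ i = 0 :=
      Finset.sum_eq_zero fun i hi => by
        rw [ih i (Finset.mem_range.mp hi), zero_mul]
    rw [hzero, zero_add, h u hu hu1] at hsplit
    have hmul : ∀ i : ℕ, d (i + n) * u ^ (i + n) = (d (i + n) * u ^ i) * u ^ n := by
      intro i; rw [pow_add]; ring
    rw [tsum_congr hmul, tsum_mul_right] at hsplit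
    have hun : u ^ n ≠ 0 := pow_ne_zero n hu.ne'
    have hG : ∑' i, d (i + n) * u ^ i = 0 := by
      rcases mul_eq_zero.mp hsplit with h' | h'
      · exact h'
      · exact absurd h' hun
    have hG2 := (hshift n).tsum_eq_zero_add
    rw [hG] at hG2
    have hdn : d n = -(∑' i, d (i + 1 + n) * u ^ (i + 1)) := by
      have : 0 = d (0 + n) * u ^ 0 + ∑' i, d (i + 1 + n) * u ^ (i + 1) := hG2
      simp only [zero_add, pow_zero, mul_one] at this
      linarith
    have habs : |∑' i, d (i + 1 + n) * u ^ (i + 1)| ≤ u * S := by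
      have hsh : Summable fun i => |d (i + 1 + n) * u ^ (i + 1)| := by
        refine Summable.of_nonneg_of_le (fun i => abs_nonneg _) (fun i => ?_)
          ((summable_nat_add_iff (1 + n)).mpr hd)
        rw [abs_mul, abs_pow, abs_of_nonneg hu.le]
        have : d (i + 1 + n) = d (i + (1 + n)) := by ring_nf
        rw [this]
        exact mul_le_of_le_one_right (abs_nonneg _) (hupow _)
      have h1 : |∑' i, d (i + 1 + n) * u ^ (i + 1)| ≤ ∑' i, |d (i + 1 + n) * u ^ (i + 1)| := by
        have := norm_tsum_le_tsum_norm (f := fun i => d (i + 1 + n) * u ^ (i + 1))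
          (hsh.congr fun i => (Real.norm_eq_abs _).symm)
        simpa only [Real.norm_eq_abs] using this
      have h2 : ∑' i, |d (i + 1 + n) * u ^ (i + 1)| ≤ ∑' i, |d (i + (1 + n))| * u := by
        refine Summable.tsum_le_tsum (fun i => ?_) hsh ?_
        · rw [abs_mul, abs_pow, abs_of_nonneg hu.le]
          have he : i + 1 + n = i + (1 + n) := by ring
          rw [he]
          have : u ^ (i + 1) ≤ u := by
            calc u ^ (i + 1) = u ^ i * u := by rw [pow_succ]
              _ ≤ 1 * u := mul_le_mul_of_nonneg_right (hupow i) hu.le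
              _ = u := one_mul u
          exact mul_le_mul_of_nonneg_left this (abs_nonneg _)
        · exact ((summable_nat_add_iff (1 + n)).mpr hd).mul_right u
      have h3 : ∑' i, |d (i + (1 + n))| * u ≤ S * u := by
        rw [tsum_mul_right]
        refine mul_le_mul_of_nonneg_right ?_ hu.le
        have hsplit2 := hd.sum_add_tsum_nat_add (1 + n)
        have : 0 ≤ ∑ i ∈ Finset.range (1 + n), |d i| :=
          Finset.sum_nonneg fun i _ => abs_nonneg _
        linarith
      calc |∑' i, d (i + 1 + n) * u ^ (i + 1)| ≤ ∑' i, |d (i + 1 + n) * u ^ (i + 1)| := h1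
        _ ≤ ∑' i, |d (i + (1 + n))| * u := h2
        _ ≤ S * u := h3
        _ = u * S := mul_comm _ _
    rw [hdn, abs_neg]
    exact habs
  by_contra hne
  have hpos : 0 < |d n| := abs_pos.mpr hne
  set u : ℝ := min (1/2) (|d n| / (2 * S + 1)) with hu
  have hu0 : 0 < u := lt_min (by norm_num) (by positivity)
  have hu1 : u < 1 := lt_of_le_of_lt (min_le_left _ _) (by norm_num)
  have h1 := key u hu0 hu1
  have h2 : u ≤ |d n| / (2 * S + 1) := min_le_right _ _
  have h3 : u * S ≤ (|d n| / (2 * S + 1)) * S :=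
    mul_le_mul_of_nonneg_right h2 hS0
  have h4 : (|d n| / (2 * S + 1)) * S < |d n| := by
    rw [div_mul_eq_mul_div, div_lt_iff₀ (by positivity)]
    nlinarith
  linarith

private lemma integral_repr {ρ : Measure ℝ} [IsProbabilityMeasure ρ]
    (hρ : ρ (Set.range ((↑) : ℕ → ℝ))ᶜ = 0) {f : ℝ → ℝ} (hf : Integrable f ρ) :
    ∫ x, f x ∂ρ = ∑' n : ℕ, (ρ {((n : ℕ) : ℝ)}).toReal * f n := by
  have hmem : ∀ᵐ x ∂ρ, x ∈ Set.range ((↑) : ℕ → ℝ) := by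
    rw [ae_iff]
    convert hρ using 2
    rfl
  have hr : ρ.restrict (Set.range ((↑) : ℕ → ℝ)) = ρ :=
    Measure.restrict_eq_self_of_ae_mem hmem
  conv_lhs => rw [← hr]
  rw [setIntegral_countable f (Set.countable_range _) (by rw [IntegrableOn, hr]; exact hf)]
  rw [← (Equiv.ofInjective _ (Nat.cast_injective : Function.Injective ((↑) : ℕ → ℝ))).tsum_eq]
  refine tsum_congr fun n => ?_
  simp [Equiv.ofInjective, smul_eq_mul, measureReal_def]

private lemma measure_eq_on_nat {ρ₁ ρ₂ : Measure ℝ} [IsProbabilityMeasure ρ₁]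
    [IsProbabilityMeasure ρ₂]
    (h₁ : ρ₁ (Set.range ((↑) : ℕ → ℝ))ᶜ = 0) (h₂ : ρ₂ (Set.range ((↑) : ℕ → ℝ))ᶜ = 0)
    (hsing : ∀ n : ℕ, ρ₁ {((n : ℕ) : ℝ)} = ρ₂ {((n : ℕ) : ℝ)}) : ρ₁ = ρ₂ := by
  have hSm : MeasurableSet (Set.range ((↑) : ℕ → ℝ)) :=
    (Set.countable_range _).measurableSet
  ext s hs
  have key : ∀ (ρ : Measure ℝ), ρ (Set.range ((↑) : ℕ → ℝ))ᶜ = 0 →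
      ρ s = ∑' n : ℕ, ρ (s ∩ {((n : ℕ) : ℝ)}) := by
    intro ρ hρ
    have h1 : ρ s = ρ (s ∩ Set.range ((↑) : ℕ → ℝ)) := by
      have hd := measure_inter_add_diff s hSm (μ := ρ)
      have h2 : ρ (s \ Set.range ((↑) : ℕ → ℝ)) = 0 :=
        measure_mono_null (Set.diff_subset_compl _ _) hρ
      rw [h2, add_zero] at hd
      exact hd.symm
    have h3 : s ∩ Set.range ((↑) : ℕ → ℝ) = ⋃ n : ℕ, s ∩ {((n : ℕ) : ℝ)} := by
      ext x
      simp only [Set.mem_inter_iff, Set.mem_range, Set.mem_iUnion, Set.mem_singleton_iff]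
      constructor
      · rintro ⟨hx, n, rfl⟩; exact ⟨n, hx, rfl⟩
      · rintro ⟨n, hx, rfl⟩; exact ⟨hx, n, rfl⟩
    rw [h1, h3, measure_iUnion ?_ fun n => hs.inter (measurableSet_singleton _)]
    intro i j hij
    refine Set.disjoint_left.mpr fun x hxi hxj => ?_
    have : ((i : ℕ) : ℝ) = ((j : ℕ) : ℝ) := by
      rw [← hxi.2, ← hxj.2]
    exact hij (Nat.cast_injective this)
  rw [key ρ₁ h₁, key ρ₂ h₂]
  refine tsum_congr fun n => ?_
  by_cases hn : ((n : ℕ) : ℝ) ∈ s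
  · have : s ∩ {((n : ℕ) : ℝ)} = {((n : ℕ) : ℝ)} :=
      Set.inter_eq_self_of_subset_right (Set.singleton_subset_iff.mpr hn)
    rw [this, hsing]
  · have : s ∩ {((n : ℕ) : ℝ)} = ∅ := by
      ext x; simp only [Set.mem_inter_iff, Set.mem_singleton_iff, Set.mem_empty_iff_false,
        iff_false, not_and]
      rintro hx rfl; exact hn hx
    rw [this]
    simp

private def acos : ℕ → ℝ := fun n => if Even n then (-1 : ℝ) ^ (n / 2) * (2 * π) ^ n / n ! else 0

private lemma hasSum_cos_series (x : ℝ) :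
    HasSum (fun n => acos n * x ^ n) (Real.cos (2 * π * x)) := by
  have hinj : Function.Injective (fun k : ℕ => 2 * k) := fun a b h => by simp only [] at h; omega
  have hvan : ∀ m ∉ Set.range (fun k : ℕ => 2 * k), acos m * x ^ m = 0 := by
    intro m hm
    have hodd : ¬ Even m := by
      simp only [Set.mem_range] at hm
      intro ⟨r, hr⟩
      exact hm ⟨r, by omega⟩
    simp [acos, hodd]
  refine (Function.Injective.hasSum_iff hinj hvan).mp ?_
  have h := Real.hasSum_cos (2 * π * x)
  have key : (fun n : ℕ => (-1 : ℝ) ^ n * (2 * π * x) ^ (2 * n) / ((2 * n)! : ℕ))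
      = (fun n => acos n * x ^ n) ∘ (fun k : ℕ => 2 * k) := by
    funext k
    simp only [Function.comp, acos, if_pos (even_two_mul k)]
    have hdiv : 2 * k / 2 = k := by omega
    rw [hdiv, mul_pow, mul_pow]
    ring
  rwa [key] at h

private lemma acos_abs (n : ℕ) : |acos n| ≤ (2 * π) ^ n / n ! := by
  unfold acos
  by_cases h : Even n
  · rw [if_pos h, abs_div, abs_mul, abs_pow, abs_pow, abs_neg, abs_one, one_pow, one_mul,
      abs_of_nonneg (by positivity : (0:ℝ) ≤ 2 * π), abs_of_nonneg (by positivity : (0:ℝ) ≤ ((n ! : ℕ) : ℝ))]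
  · rw [if_neg h, abs_zero]
    positivity

end A3

end StmtNineAux

open Real Filter
open scoped ENNReal Nat Topology

set_option maxHeartbeats 2000000 in
/-- The Poisson distribution is determined by its moments: if a Borel probability measure
`ν` on `ℝ` has the same moments of all orders as the Poisson distribution with parameter
`λ` (viewed as a measure on `ℝ` via `ℕ ⊆ ℝ`), then `ν` equals that Poisson distribution. -/
theorem stmt_9 (lam : ℝ≥0) (hlam : 0 < lam)
    (ν : Measure ℝ) [IsProbabilityMeasure ν]
    (hνint : ∀ k : ℕ, Integrable (fun x => x ^ k) ν)
    (hmom : ∀ k : ℕ, ∫ x, x ^ k ∂ν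
      = ∫ x, x ^ k ∂((poissonMeasure lam).map (Nat.cast : ℕ → ℝ))) :
    ν = (poissonMeasure lam).map (Nat.cast : ℕ → ℝ) := by
  classical
  set μ : Measure ℝ := (poissonMeasure lam).map (Nat.cast : ℕ → ℝ) with hμdef
  have hcast : Measurable (Nat.cast : ℕ → ℝ) := measurable_from_nat
  haveI hμprob : IsProbabilityMeasure μ := Measure.isProbabilityMeasure_map hcast.aemeasurable
  -- basic integrability on μ
  have hint_mu_pow : ∀ k : ℕ, Integrable (fun x : ℝ => x ^ k) μ := fun k =>
    (integrable_map_measure (continuous_pow k).aestronglyMeasurable hcast.aemeasurable).mpr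
      (pois_int_pow lam k)
  have habs_cast : ∀ (k : ℕ) (n : ℕ), |((n : ℕ) : ℝ)| ^ k = ((n : ℕ) : ℝ) ^ k := fun k n => by
    rw [Nat.abs_cast]
  have hint_mu_abs : ∀ k : ℕ, Integrable (fun x : ℝ => |x| ^ k) μ := fun k =>
    (integrable_map_measure (continuous_abs.pow k).aestronglyMeasurable
      hcast.aemeasurable).mpr ((pois_int_pow lam k).congr
        (Filter.Eventually.of_forall fun n => (habs_cast k n).symm))
  have hpmf_toReal : ∀ n : ℕ, ((poissonPMF lam) n).toReal = poissonPMFReal lam n := fun n => by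
    show (ENNReal.ofReal (poissonPMFReal lam n)).toReal = _
    rw [ENNReal.toReal_ofReal poissonPMFReal_nonneg]
  have hPM : poissonMeasure lam = (poissonPMF lam).toMeasure := Measure.ext_iff_singleton.mpr fun n => by
    rw [poissonMeasure_singleton, PMF.toMeasure_apply_singleton _ _ (measurableSet_singleton n)]; rfl
  have hmu_pow_eq : ∀ k : ℕ, ∫ x, x ^ k ∂μ = ∑' n : ℕ, poissonPMFReal lam n * (n : ℝ) ^ k := by
    intro k
    rw [hμdef, integral_map hcast.aemeasurable (continuous_pow k).aestronglyMeasurable]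
    rw [hPM,
      PMF.integral_eq_tsum _ _ (hPM ▸ pois_int_pow lam k)]
    exact tsum_congr fun n => by rw [smul_eq_mul, hpmf_toReal]
  have hmu_abs_eq : ∀ k : ℕ, ∫ x, |x| ^ k ∂μ = ∑' n : ℕ, poissonPMFReal lam n * (n : ℝ) ^ k := by
    intro k
    rw [hμdef, integral_map (f := fun x : ℝ => |x| ^ k) hcast.aemeasurable (continuous_abs.pow k).aestronglyMeasurable]
    rw [hPM,
      PMF.integral_eq_tsum _ _ (hPM ▸ (pois_int_pow lam k).congr
        (Filter.Eventually.of_forall fun n => (habs_cast k n).symm))]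
    exact tsum_congr fun n => by rw [smul_eq_mul, hpmf_toReal, habs_cast]
  have hmu_abs_bound : ∀ {s : ℝ}, 0 < s → ∀ k : ℕ,
      ∫ x, |x| ^ k ∂μ ≤ (k ! : ℝ) * Real.exp ((lam : ℝ) * Real.exp s) / s ^ k := by
    intro s hs k
    rw [hmu_abs_eq k]
    exact pois_moment_bound lam hs k
  -- ν-side integrability
  have hint_nu_abs : ∀ k : ℕ, Integrable (fun x : ℝ => |x| ^ k) ν := fun k => by
    have h := (hνint k).abs
    refine h.congr (Filter.Eventually.of_forall fun x => ?_)
    show |x ^ k| = |x| ^ k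
    exact abs_pow x k
  -- moment bound for ν
  have Mnu_bound : ∀ s : ℝ, 0 < s → ∀ k : ℕ,
      ∫ x, |x| ^ k ∂ν ≤ (Real.exp ((lam : ℝ) * Real.exp (2 * s)) + 1) * k ! / s ^ k := by
    intro s hs k
    have h2s : (0 : ℝ) < 2 * s := by linarith
    set E : ℝ := Real.exp ((lam : ℝ) * Real.exp (2 * s)) with hE
    have hE0 : 0 < E := Real.exp_pos _
    set A : ℝ := (k ! : ℝ) / s ^ k with hA
    have hA0 : 0 < A := by positivity
    have hpt : ∀ x : ℝ, |x| ^ k ≤ x ^ (2 * k) / A + A := by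
      intro x
      have hxx : x ^ (2 * k) = (|x| ^ k) ^ 2 := by
        rw [← pow_mul, mul_comm k 2, Even.pow_abs (even_two_mul k)]
      rcases le_or_gt (|x| ^ k) A with h | h
      · have h0 : 0 ≤ x ^ (2 * k) / A := by
          rw [hxx]; positivity
        linarith
      · have h1 : |x| ^ k ≤ (|x| ^ k) ^ 2 / A := by
          rw [le_div_iff₀ hA0]
          nlinarith [pow_nonneg (abs_nonneg x) k]
        rw [hxx]
        linarith
    have hint2k := hνint (2 * k)
    have h1 : ∫ x, |x| ^ k ∂ν ≤ ∫ x, (x ^ (2 * k) / A + A) ∂ν :=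
      integral_mono (hint_nu_abs k) ((hint2k.div_const A).add (integrable_const A)) hpt
    have h2 : ∫ x, (x ^ (2 * k) / A + A) ∂ν = (∫ x, x ^ (2 * k) ∂ν) / A + A := by
      rw [integral_add (hint2k.div_const A) (integrable_const A), integral_div, integral_const]
      simp
    have h3 : ∫ x, x ^ (2 * k) ∂ν ≤ (((2 * k)! : ℕ) : ℝ) * E / (2 * s) ^ (2 * k) := by
      rw [hmom (2 * k), hmu_pow_eq (2 * k)]
      exact pois_moment_bound lam h2s (2 * k)
    have h4 : (((2 * k)! : ℕ) : ℝ) * E / (2 * s) ^ (2 * k) / A ≤ E * (k ! : ℝ) / s ^ k := by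
      have hfac := factorial_two_mul_le' k
      have hs' : (0 : ℝ) < s ^ k := pow_pos hs k
      rw [div_div, div_le_div_iff₀ (by positivity) hs']
      have hexp : ((2 * s) ^ (2 * k) * A) = 4 ^ k * s ^ k * (k ! : ℝ) := by
        have e1 : (2 * s) ^ (2 * k) = 4 ^ k * (s ^ k * s ^ k) := by
          rw [show 2 * k = k + k by omega, pow_add, mul_pow,
            show (4:ℝ) ^ k = 2 ^ k * 2 ^ k by rw [← mul_pow]; norm_num]
          ring
        rw [hA, e1]
        field_simp
      rw [hexp]
      have h5 := mul_le_mul_of_nonneg_right hfac (mul_pos hE0 hs').le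
      nlinarith [h5]
    have hmono : (∫ x, x ^ (2 * k) ∂ν) / A ≤ (((2 * k)! : ℕ) : ℝ) * E / (2 * s) ^ (2 * k) / A :=
      (div_le_div_iff_of_pos_right hA0).mpr h3
    calc ∫ x, |x| ^ k ∂ν ≤ (∫ x, x ^ (2 * k) ∂ν) / A + A := le_trans h1 (le_of_eq h2)
      _ ≤ (((2 * k)! : ℕ) : ℝ) * E / (2 * s) ^ (2 * k) / A + A := add_le_add_left hmono A
      _ ≤ E * (k ! : ℝ) / s ^ k + A := add_le_add_left h4 A
      _ = (E + 1) * k ! / s ^ k := by rw [hA]; ring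
  -- master equality lemma
  have main : ∀ (a : ℕ → ℝ) (f : ℝ → ℝ) (t : ℝ), 0 ≤ t →
      (∀ n, |a n| ≤ t ^ n / n !) → Continuous f →
      (∀ x, HasSum (fun n => a n * x ^ n) (f x)) →
      Integrable f ν ∧ Integrable f μ ∧ ∫ x, f x ∂ν = ∫ x, f x ∂μ := by
    intro a f t ht ha hfc hf
    set s : ℝ := t + 1 with hsdef
    have hs0 : (0 : ℝ) < s := by positivity
    have hts : t < s := by rw [hsdef]; linarith
    set B : ℝ := Real.exp ((lam : ℝ) * Real.exp (2 * s)) + 1 with hB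
    have hB0 : (0 : ℝ) ≤ B := by positivity
    have hMν : ∀ k : ℕ, ∫ x, |x| ^ k ∂ν ≤ B * k ! / s ^ k := fun k => Mnu_bound s hs0 k
    have hMμ : ∀ k : ℕ, ∫ x, |x| ^ k ∂μ ≤ B * k ! / s ^ k := by
      intro k
      have h1 := hmu_abs_bound hs0 k
      have h2 : Real.exp ((lam : ℝ) * Real.exp s) ≤ Real.exp ((lam : ℝ) * Real.exp (2 * s)) :=
        Real.exp_le_exp.mpr (mul_le_mul_of_nonneg_left
          (Real.exp_le_exp.mpr (by linarith)) lam.coe_nonneg)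
      have hk : (0 : ℝ) ≤ (k ! : ℝ) := by positivity
      have hsk : (0 : ℝ) < s ^ k := pow_pos hs0 k
      calc ∫ x, |x| ^ k ∂μ ≤ (k ! : ℝ) * Real.exp ((lam : ℝ) * Real.exp s) / s ^ k := h1
        _ ≤ B * k ! / s ^ k := by
            rw [div_le_div_iff₀ hsk hsk]
            have hEp : (0:ℝ) < Real.exp ((lam : ℝ) * Real.exp (2*s)) := Real.exp_pos _
            nlinarith [mul_le_mul_of_nonneg_right (mul_le_mul_of_nonneg_left h2 hk) hsk.le,
              mul_nonneg hk hsk.le]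
    have hsumν : Summable fun n => |a n| * ∫ x, |x| ^ n ∂ν :=
      summable_aux (fun n => integral_nonneg fun x => by positivity) hB0 ht hts hMν ha
    have hsumμ : Summable fun n => |a n| * ∫ x, |x| ^ n ∂μ :=
      summable_aux (fun n => integral_nonneg fun x => by positivity) hB0 ht hts hMμ ha
    obtain ⟨hiν, heν⟩ := series_integral hfc.aestronglyMeasurable hint_nu_abs hsumν hf
    obtain ⟨hiμ, heμ⟩ := series_integral hfc.aestronglyMeasurable hint_mu_abs hsumμ hf
    exact ⟨hiν, hiμ, by rw [heν, heμ]; exact tsum_congr fun n => by rw [hmom n]⟩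
  -- application 1: exponentials
  have hmgf : ∀ t : ℝ, Integrable (fun x => Real.exp (t * x)) ν ∧
      Integrable (fun x => Real.exp (t * x)) μ ∧
      ∫ x, Real.exp (t * x) ∂ν = ∫ x, Real.exp (t * x) ∂μ := by
    intro t
    refine main (fun n => t ^ n / n !) (fun x => Real.exp (t * x)) |t| (abs_nonneg t)
      (fun n => ?_) (Real.continuous_exp.comp (continuous_const.mul continuous_id)) (fun x => ?_)
    · rw [abs_div, abs_pow, abs_of_nonneg (by positivity : (0:ℝ) ≤ ((n ! : ℕ) : ℝ))]
    · have h := hasSum_exp' (t * x)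
      have key : (fun n : ℕ => (t * x) ^ n / n !) = fun n => (t ^ n / n !) * x ^ n := by
        funext n; rw [mul_pow]; ring
      rwa [key] at h
  -- application 2: cosine
  have hcos : Integrable (fun x => Real.cos (2 * π * x)) ν ∧
      Integrable (fun x => Real.cos (2 * π * x)) μ ∧
      ∫ x, Real.cos (2 * π * x) ∂ν = ∫ x, Real.cos (2 * π * x) ∂μ :=
    main acos (fun x => Real.cos (2 * π * x)) (2 * π) (by positivity) acos_abs
      (Real.continuous_cos.comp (continuous_const.mul continuous_id)) hasSum_cos_series
  -- value of cosine integral on μ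
  have hcosμ : ∫ x, Real.cos (2 * π * x) ∂μ = 1 := by
    rw [hμdef, integral_map hcast.aemeasurable
      (by continuity : Continuous fun x : ℝ => Real.cos (2 * π * x)).aestronglyMeasurable]
    have hone : ∀ n : ℕ, Real.cos (2 * π * ((n : ℕ) : ℝ)) = 1 := by
      intro n
      have h := Real.cos_int_mul_two_pi (n : ℤ)
      rw [show (((n : ℤ) : ℝ)) * (2 * π) = 2 * π * ((n : ℕ) : ℝ) by push_cast; ring] at h
      exact h
    rw [integral_congr_ae (Filter.Eventually.of_forall fun n => hone n)]
    simp
  -- support of ν is contained in the integers, and no mass on negatives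
  have haeZ : ∀ᵐ x ∂ν, ∃ m : ℤ, (m : ℝ) = x := by
    obtain ⟨hcν, hcμ, hce⟩ := hcos
    have hval : ∫ x, (1 - Real.cos (2 * π * x)) ∂ν = 0 := by
      rw [integral_sub (integrable_const 1) hcν, hce, hcosμ, integral_const]
      simp
    have hnn : (0 : ℝ → ℝ) ≤ fun x => 1 - Real.cos (2 * π * x) := fun x => by
      have := Real.cos_le_one (2 * π * x); simp only [Pi.zero_apply]; linarith
    have hae := (integral_eq_zero_iff_of_nonneg hnn
      ((integrable_const (1:ℝ)).sub hcν)).mp hval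
    filter_upwards [hae] with x hx
    have hx' : Real.cos (2 * π * x) = 1 := by
      have : 1 - Real.cos (2 * π * x) = 0 := hx
      linarith
    obtain ⟨m, hm⟩ := (Real.cos_eq_one_iff _).mp hx'
    refine ⟨m, ?_⟩
    have h2π : (2 * π : ℝ) ≠ 0 := by positivity
    have : (m : ℝ) * (2 * π) = x * (2 * π) := by rw [hm]; ring
    exact mul_right_cancel₀ h2π this
  have hneg : ∀ j : ℕ, ν {-((j : ℝ) + 1)} = 0 := by
    intro j
    have hc1 : ∀ r : ℝ, 0 < r →
        (ν {-((j : ℝ) + 1)}).toReal ≤ Real.exp (-(r * ((j : ℝ) + 1))) := by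
      intro r hr
      obtain ⟨hiν, hiμ, hie⟩ := hmgf (-r)
      have hle : ∫ x, Real.exp (-r * x) ∂μ ≤ 1 := by
        rw [hμdef, integral_map hcast.aemeasurable
          (by continuity : Continuous fun x : ℝ => Real.exp (-r * x)).aestronglyMeasurable]
        have hi' : Integrable (fun n : ℕ => Real.exp (-r * ((n : ℕ) : ℝ))) (poissonMeasure lam) :=
          (integrable_map_measure (Real.continuous_exp.comp
            (continuous_const.mul continuous_id)).aestronglyMeasurable
            hcast.aemeasurable).mp (hμdef ▸ hiμ)
        calc ∫ n : ℕ, Real.exp (-r * ((n : ℕ) : ℝ)) ∂(poissonMeasure lam)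
            ≤ ∫ _n : ℕ, (1 : ℝ) ∂(poissonMeasure lam) := by
              refine integral_mono hi' (integrable_const 1) fun n => ?_
              refine Real.exp_le_one_iff.mpr ?_
              have h0 : (0:ℝ) ≤ (n:ℝ) := Nat.cast_nonneg n
              nlinarith
          _ = 1 := by simp
      have hlow : (ν {-((j : ℝ) + 1)}).toReal * Real.exp (-r * (-((j : ℝ) + 1)))
          ≤ ∫ x, Real.exp (-r * x) ∂ν := by
        have h := setIntegral_le_integral (s := {-((j : ℝ) + 1)}) hiν
          (Filter.Eventually.of_forall fun x => Real.exp_nonneg _)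
        rwa [integral_singleton, smul_eq_mul] at h
      have hE : Real.exp (-r * (-((j : ℝ) + 1))) = Real.exp (r * ((j : ℝ) + 1)) := by
        congr 1; ring
      rw [hE] at hlow
      have hch : (ν {-((j : ℝ) + 1)}).toReal * Real.exp (r * ((j : ℝ) + 1)) ≤ 1 := by
        calc (ν {-((j : ℝ) + 1)}).toReal * Real.exp (r * ((j : ℝ) + 1))
            ≤ ∫ x, Real.exp (-r * x) ∂ν := hlow
          _ = ∫ x, Real.exp (-r * x) ∂μ := hie
          _ ≤ 1 := hle
      have hEp : 0 < Real.exp (r * ((j : ℝ) + 1)) := Real.exp_pos _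
      rw [Real.exp_neg]
      have hinv : 0 < (Real.exp (r * ((j : ℝ) + 1)))⁻¹ := inv_pos.mpr hEp
      nlinarith [mul_le_mul_of_nonneg_right hch hinv.le,
        mul_inv_cancel₀ hEp.ne']
    have htend : Filter.Tendsto (fun r : ℝ => Real.exp (-(r * ((j : ℝ) + 1))))
        Filter.atTop (nhds 0) := by
      apply Real.tendsto_exp_atBot.comp
      have h1 : Filter.Tendsto (fun r : ℝ => r * ((j : ℝ) + 1)) Filter.atTop Filter.atTop :=
        Filter.Tendsto.atTop_mul_const (by positivity) Filter.tendsto_id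
      exact Filter.tendsto_neg_atTop_atBot.comp h1
    have hle0 : (ν {-((j : ℝ) + 1)}).toReal ≤ 0 :=
      ge_of_tendsto htend (Filter.eventually_atTop.mpr
        ⟨1, fun r hr => hc1 r (by linarith)⟩)
    have h0 : (ν {-((j : ℝ) + 1)}).toReal = 0 :=
      le_antisymm hle0 ENNReal.toReal_nonneg
    exact (ENNReal.toReal_eq_zero_iff _).mp h0 |>.resolve_right (measure_ne_top ν _)
  have hSm : MeasurableSet (Set.range ((↑) : ℕ → ℝ)) :=
    (Set.countable_range _).measurableSet
  have hsupport : ν (Set.range ((↑) : ℕ → ℝ))ᶜ = 0 := by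
    have hsub : (Set.range ((↑) : ℕ → ℝ))ᶜ ⊆
        {x : ℝ | ¬ ∃ m : ℤ, (m : ℝ) = x} ∪ ⋃ j : ℕ, {-((j : ℝ) + 1)} := by
      intro x hx
      by_cases hm : ∃ m : ℤ, (m : ℝ) = x
      · obtain ⟨m, rfl⟩ := hm
        right
        rcases lt_or_ge m 0 with hm0 | hm0
        · refine Set.mem_iUnion.mpr ⟨(-m - 1).toNat, ?_⟩
          simp only [Set.mem_singleton_iff]
          have hcast' : (((-m - 1).toNat : ℕ) : ℝ) = ((-m - 1 : ℤ) : ℝ) := by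
            exact_mod_cast congrArg (Int.cast : ℤ → ℝ) (Int.toNat_of_nonneg (by omega))
          rw [hcast']
          push_cast
          ring
        · exact absurd ⟨m.toNat, by
            exact_mod_cast congrArg (Int.cast : ℤ → ℝ) (Int.toNat_of_nonneg hm0)⟩ hx
      · exact Or.inl hm
    refine measure_mono_null hsub (measure_union_null ?_ (measure_iUnion_null fun j => hneg j))
    exact ae_iff.mp haeZ
  have hμsupp : μ (Set.range ((↑) : ℕ → ℝ))ᶜ = 0 := by
    rw [hμdef, Measure.map_apply hcast hSm.compl]
    have : (Nat.cast : ℕ → ℝ) ⁻¹' (Set.range ((↑) : ℕ → ℝ))ᶜ = ∅ := by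
      ext n; simp
    rw [this, measure_empty]
  -- singleton masses of μ
  have hμsing : ∀ n : ℕ, μ {((n : ℕ) : ℝ)} = poissonMeasure lam {n} := by
    intro n
    rw [hμdef, Measure.map_apply hcast (measurableSet_singleton _)]
    congr 1
    ext m
    simp [Nat.cast_inj]
  -- summability of singleton masses
  have hsum_sing : ∀ (ρ : Measure ℝ) [IsProbabilityMeasure ρ],
      Summable fun n : ℕ => (ρ {((n : ℕ) : ℝ)}).toReal := by
    intro ρ hρ
    apply ENNReal.summable_toReal
    have h1 : ∑' n : ℕ, ρ {((n : ℕ) : ℝ)} ≤ ρ Set.univ := by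
      rw [← measure_iUnion (fun i j hij => Set.disjoint_singleton.mpr
        (fun h => hij (Nat.cast_injective h))) (fun n => measurableSet_singleton _)]
      exact measure_mono (Set.subset_univ _)
    rw [measure_univ] at h1
    exact ne_top_of_le_ne_top ENNReal.one_ne_top h1
  -- equality of generating functions on (0,1)
  have hrep : ∀ u : ℝ, 0 < u → u < 1 →
      ∑' n : ℕ, (ν {((n : ℕ) : ℝ)}).toReal * u ^ n
        = ∑' n : ℕ, (μ {((n : ℕ) : ℝ)}).toReal * u ^ n := by
    intro u hu hu1
    obtain ⟨hiν, hiμ, hie⟩ := hmgf (Real.log u)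
    have h1 := integral_repr hsupport hiν
    have h2 := integral_repr hμsupp hiμ
    rw [h1, h2] at hie
    have hexp : ∀ n : ℕ, Real.exp (Real.log u * ((n : ℕ) : ℝ)) = u ^ n := fun n => by
      rw [mul_comm, Real.exp_nat_mul, Real.exp_log hu]
    have e1 : (fun n : ℕ => (ν {((n : ℕ) : ℝ)}).toReal * Real.exp (Real.log u * ((n : ℕ) : ℝ)))
        = fun n : ℕ => (ν {((n : ℕ) : ℝ)}).toReal * u ^ n := funext fun n => by rw [hexp]
    have e2 : (fun n : ℕ => (μ {((n : ℕ) : ℝ)}).toReal * Real.exp (Real.log u * ((n : ℕ) : ℝ)))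
        = fun n : ℕ => (μ {((n : ℕ) : ℝ)}).toReal * u ^ n := funext fun n => by rw [hexp]
    rw [e1, e2] at hie
    exact hie
  -- extract coefficients
  have hsummν := hsum_sing ν
  have hsummμ := hsum_sing μ
  have hd : ∀ n : ℕ, ν {((n : ℕ) : ℝ)} = μ {((n : ℕ) : ℝ)} := by
    have hdz := coeff_zero
      (d := fun n : ℕ => (ν {((n : ℕ) : ℝ)}).toReal - (μ {((n : ℕ) : ℝ)}).toReal) ?_ ?_
    · intro n
      have h := hdz n
      have h' : (ν {((n : ℕ) : ℝ)}).toReal = (μ {((n : ℕ) : ℝ)}).toReal := by linarith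
      exact (ENNReal.toReal_eq_toReal_iff' (measure_ne_top _ _) (measure_ne_top _ _)).mp h'
    · refine Summable.of_norm_bounded (hsummν.add hsummμ) fun n => ?_
      simp only [Real.norm_eq_abs, abs_abs]
      refine (abs_sub _ _).trans (le_of_eq ?_)
      rw [abs_of_nonneg ENNReal.toReal_nonneg, abs_of_nonneg ENNReal.toReal_nonneg]
    · intro u hu hu1
      have hupow : ∀ m : ℕ, u ^ m ≤ 1 := fun m => pow_le_one₀ hu.le hu1.le
      have hsν : Summable fun n : ℕ => (ν {((n : ℕ) : ℝ)}).toReal * u ^ n := by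
        refine Summable.of_nonneg_of_le
          (fun n => mul_nonneg ENNReal.toReal_nonneg (by positivity)) (fun n => ?_) hsummν
        exact mul_le_of_le_one_right ENNReal.toReal_nonneg (hupow n)
      have hsμ : Summable fun n : ℕ => (μ {((n : ℕ) : ℝ)}).toReal * u ^ n := by
        refine Summable.of_nonneg_of_le
          (fun n => mul_nonneg ENNReal.toReal_nonneg (by positivity)) (fun n => ?_) hsummμ
        exact mul_le_of_le_one_right ENNReal.toReal_nonneg (hupow n)
      have : (fun n : ℕ => ((ν {((n : ℕ) : ℝ)}).toReal - (μ {((n : ℕ) : ℝ)}).toReal) * u ^ n)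
          = fun n : ℕ => (ν {((n : ℕ) : ℝ)}).toReal * u ^ n
            - (μ {((n : ℕ) : ℝ)}).toReal * u ^ n := funext fun n => by ring
      rw [this, Summable.tsum_sub hsν hsμ, hrep u hu hu1, sub_self]
  exact measure_eq_on_nat hsupport hμsupp hd
end

section
/- If μ₁, ..., μ_m are Borel probability measures on ℝ, each determined by its moments, then the product measure μ₁ × ⋯ × μ_m on ℝ^m is determined by its mixed moments: any Borel probability measure ν on ℝ^m with ∫ x₁^{r₁}⋯x_m^{r_m} dν = ∏ᵢ ∫ x^{rᵢ} dμᵢ for all r₁,...,r_m ∈ ℕ equals μ₁ × ⋯ × μ_m. -/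
open MeasureTheory Finset

namespace Stmt10

variable {m : ℕ}

/-- monomial in the tail coordinates -/
def gfun (s : Fin m → ℕ) (x : Fin (m + 1) → ℝ) : ℝ := ∏ i, x i.succ ^ s i

/-- dominating weight -/
def wfun (s : Fin m → ℕ) (x : Fin (m + 1) → ℝ) : ℝ := ∏ i, (1 + x i.succ ^ (2 * s i))

noncomputable def cgv (μ : Fin (m + 1) → Measure ℝ) (s : Fin m → ℕ) : ℝ := ∏ i, ∫ t, t ^ s i ∂(μ i.succ)

noncomputable def cwv (μ : Fin (m + 1) → Measure ℝ) (s : Fin m → ℕ) : ℝ :=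
  ∑ T ∈ (Finset.univ : Finset (Fin m)).powerset,
    ∏ i, ∫ t, t ^ (if i ∈ T then 2 * s i else 0) ∂(μ i.succ)

lemma gfun_meas (s : Fin m → ℕ) : Measurable (gfun s) :=
  Finset.measurable_prod _ fun i _ => (measurable_pi_apply i.succ).pow_const _

lemma wfun_meas (s : Fin m → ℕ) : Measurable (wfun s) :=
  Finset.measurable_prod _ fun i _ =>
    measurable_const.add ((measurable_pi_apply i.succ).pow_const _)

lemma abs_gfun_le (s : Fin m → ℕ) (x : Fin (m + 1) → ℝ) : |gfun s x| ≤ wfun s x := by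
  rw [gfun, wfun, Finset.abs_prod]
  refine Finset.prod_le_prod (fun i _ => abs_nonneg _) fun i _ => ?_
  have h2 : x i.succ ^ (2 * s i) = (x i.succ ^ s i) ^ 2 := by rw [mul_comm, pow_mul]
  rw [h2]
  nlinarith [sq_nonneg (|x i.succ ^ s i| - 1), sq_abs (x i.succ ^ s i),
    abs_nonneg (x i.succ ^ s i)]

lemma wfun_add_nonneg (s : Fin m → ℕ) {σ : ℝ} (hσ : |σ| ≤ 1) (x : Fin (m + 1) → ℝ) :
    0 ≤ wfun s x + σ * gfun s x := by
  have h1 : |σ * gfun s x| ≤ wfun s x := by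
    rw [abs_mul]
    calc |σ| * |gfun s x| ≤ 1 * |gfun s x| :=
          mul_le_mul_of_nonneg_right hσ (abs_nonneg _)
      _ ≤ wfun s x := by rw [one_mul]; exact abs_gfun_le s x
  have h2 := neg_abs_le (σ * gfun s x)
  linarith

/-- expansion of `x0^k * wfun` into monomials -/
lemma wsum (s : Fin m → ℕ) (k : ℕ) (x : Fin (m + 1) → ℝ) :
    x 0 ^ k * wfun s x
      = ∑ T ∈ (Finset.univ : Finset (Fin m)).powerset,
          ∏ j, x j ^ (Fin.cons k (fun i => if i ∈ T then 2 * s i else 0) : Fin (m + 1) → ℕ) j := by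
  have h1 : wfun s x = ∑ T ∈ (Finset.univ : Finset (Fin m)).powerset,
      ∏ i ∈ T, x i.succ ^ (2 * s i) := by
    rw [wfun]
    simp only [add_comm (1 : ℝ)]
    rw [Finset.prod_add]
    refine Finset.sum_congr rfl fun T hT => ?_
    simp
  have h2 : ∀ T : Finset (Fin m), ∏ i ∈ T, x i.succ ^ (2 * s i)
      = ∏ i, x i.succ ^ (if i ∈ T then 2 * s i else 0) := by
    intro T
    calc ∏ i ∈ T, x i.succ ^ (2 * s i)
        = ∏ i ∈ T, x i.succ ^ (if i ∈ T then 2 * s i else 0) :=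
          Finset.prod_congr rfl fun i hi => by rw [if_pos hi]
      _ = ∏ i, x i.succ ^ (if i ∈ T then 2 * s i else 0) :=
          Finset.prod_subset (Finset.subset_univ T) fun i _ hi => by rw [if_neg hi, pow_zero]
  rw [h1, Finset.mul_sum]
  refine Finset.sum_congr rfl fun T hT => ?_
  rw [h2 T, Fin.prod_univ_succ]
  simp

lemma gmono (s : Fin m → ℕ) (k : ℕ) (x : Fin (m + 1) → ℝ) :
    x 0 ^ k * gfun s x = ∏ j, x j ^ (Fin.cons k s : Fin (m + 1) → ℕ) j := by
  rw [gfun, Fin.prod_univ_succ]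
  simp


section
variable (μ : Fin (m + 1) → Measure ℝ) (ν : Measure (Fin (m + 1) → ℝ))
  (hνint : ∀ s : Fin (m + 1) → ℕ, Integrable (fun x => ∏ i, x i ^ s i) ν)
  (hmom : ∀ s : Fin (m + 1) → ℕ,
    ∫ x, ∏ i, x i ^ s i ∂ν = ∏ i, ∫ x, x ^ s i ∂(μ i))
  (s : Fin m → ℕ) (k : ℕ) (σ : ℝ)

lemma pt_eq : (fun x : Fin (m + 1) → ℝ => x 0 ^ k * (wfun s x + σ * gfun s x))
    = fun x => (∑ T ∈ (Finset.univ : Finset (Fin m)).powerset,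
        ∏ j, x j ^ (Fin.cons k (fun i => if i ∈ T then 2 * s i else 0) : Fin (m + 1) → ℕ) j)
      + σ * ∏ j, x j ^ (Fin.cons k s : Fin (m + 1) → ℕ) j := by
  funext x
  rw [mul_add, wsum s k x, mul_left_comm, gmono s k x]

include hνint in
lemma Fint : Integrable (fun x => x 0 ^ k * (wfun s x + σ * gfun s x)) ν := by
  rw [pt_eq]
  exact (integrable_finset_sum _ fun T _ => hνint _).add ((hνint _).const_mul σ)

include hνint hmom in
lemma Fval : ∫ x, x 0 ^ k * (wfun s x + σ * gfun s x) ∂ν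
    = (∫ t, t ^ k ∂(μ 0)) * (cwv μ s + σ * cgv μ s) := by
  have e1 : ∀ T : Finset (Fin m),
      ∫ x, ∏ j, x j ^ (Fin.cons k (fun i => if i ∈ T then 2 * s i else 0) : Fin (m + 1) → ℕ) j ∂ν
        = (∫ t, t ^ k ∂(μ 0)) * ∏ i, ∫ t, t ^ (if i ∈ T then 2 * s i else 0) ∂(μ i.succ) := by
    intro T
    rw [hmom, Fin.prod_univ_succ]
    simp
  have e2 : ∫ x, ∏ j, x j ^ (Fin.cons k s : Fin (m + 1) → ℕ) j ∂ν
      = (∫ t, t ^ k ∂(μ 0)) * cgv μ s := by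
    rw [hmom, Fin.prod_univ_succ, cgv]
    simp
  rw [pt_eq]
  rw [integral_add (integrable_finset_sum _ fun T _ => hνint _) ((hνint _).const_mul σ),
    integral_finset_sum _ fun T _ => hνint _, integral_const_mul]
  rw [Finset.sum_congr rfl fun T _ => e1 T, e2, ← Finset.mul_sum, ← cwv]
  ring

end

/-- Key claim: for each sign `σ`, the "section integral" of `wfun + σ gfun` factorizes. -/
lemma key {m : ℕ} (μ : Fin (m + 1) → Measure ℝ) (hprob : ∀ i, IsProbabilityMeasure (μ i))
    (hdet0 : ∀ ρ : Measure ℝ, IsProbabilityMeasure ρ →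
      (∀ k : ℕ, Integrable (fun x => x ^ k) ρ) →
      (∀ k : ℕ, ∫ x, x ^ k ∂ρ = ∫ x, x ^ k ∂(μ 0)) → ρ = μ 0)
    (ν : Measure (Fin (m + 1) → ℝ)) (hν : IsProbabilityMeasure ν)
    (hνint : ∀ s : Fin (m + 1) → ℕ, Integrable (fun x => ∏ i, x i ^ s i) ν)
    (hmom : ∀ s : Fin (m + 1) → ℕ,
      ∫ x, ∏ i, x i ^ s i ∂ν = ∏ i, ∫ x, x ^ s i ∂(μ i))
    (s : Fin m → ℕ) (σ : ℝ) (hσ : |σ| ≤ 1) (A : Set ℝ) (hA : MeasurableSet A) :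
    ∫ x in (fun x : Fin (m + 1) → ℝ => x 0) ⁻¹' A, (wfun s x + σ * gfun s x) ∂ν
      = (cwv μ s + σ * cgv μ s) * (μ 0 A).toReal := by
  haveI := hprob 0
  have hprm : Measurable (fun x : Fin (m + 1) → ℝ => x 0) := measurable_pi_apply 0
  set q : (Fin (m + 1) → ℝ) → NNReal := fun x => Real.toNNReal (wfun s x + σ * gfun s x)
    with hq
  have hqm : Measurable q :=
    ((wfun_meas s).add (measurable_const.mul (gfun_meas s))).real_toNNReal
  have hcoe : ∀ x, (q x : ℝ) = wfun s x + σ * gfun s x := fun x =>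
    Real.coe_toNNReal _ (wfun_add_nonneg s hσ x)
  set ρ : Measure ℝ :=
    Measure.map (fun x : Fin (m + 1) → ℝ => x 0) (ν.withDensity fun x => (q x : ENNReal))
    with hρ
  -- integrability of x^k wrt ρ
  have hF0 : Integrable (fun x => wfun s x + σ * gfun s x) ν := by
    have h := Fint ν hνint s 0 σ
    simpa using h
  have hρint : ∀ k : ℕ, Integrable (fun t : ℝ => t ^ k) ρ := by
    intro k
    have hpk : Measurable (fun t : ℝ => t ^ k) := measurable_id.pow_const k
    rw [hρ, integrable_map_measure hpk.aestronglyMeasurable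
        hprm.aemeasurable, integrable_withDensity_iff_integrable_smul hqm]
    exact (Fint ν hνint s k σ).congr (Filter.Eventually.of_forall fun x => by
      simp only [Function.comp_apply, NNReal.smul_def, hcoe, smul_eq_mul]
      ring)
  -- moments of ρ
  have hρmom : ∀ k : ℕ, ∫ t, t ^ k ∂ρ
      = (∫ t, t ^ k ∂(μ 0)) * (cwv μ s + σ * cgv μ s) := by
    intro k
    have hpk : Measurable (fun t : ℝ => t ^ k) := measurable_id.pow_const k
    calc ∫ t, t ^ k ∂ρ = ∫ x, x 0 ^ k * (wfun s x + σ * gfun s x) ∂ν := by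
          rw [hρ, integral_map hprm.aemeasurable hpk.aestronglyMeasurable,
            integral_withDensity_eq_integral_smul hqm]
          refine integral_congr_ae (Filter.Eventually.of_forall fun x => ?_)
          simp only [Function.comp_apply, NNReal.smul_def, hcoe, smul_eq_mul]
          ring
      _ = _ := Fval μ ν hνint hmom s k σ
  -- value of ρ on measurable sets
  have hρA : ∀ B : Set ℝ, MeasurableSet B → ρ B
      = ENNReal.ofReal (∫ x in (fun x : Fin (m + 1) → ℝ => x 0) ⁻¹' B,
          (wfun s x + σ * gfun s x) ∂ν) := by
    intro B hB
    rw [hρ, Measure.map_apply hprm hB, withDensity_apply _ (hprm hB)]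
    have hqq : ∀ x : Fin (m + 1) → ℝ,
        ((q x : ENNReal)) = ENNReal.ofReal (wfun s x + σ * gfun s x) := fun x => rfl
    simp only [hqq]
    rw [← ofReal_integral_eq_lintegral_ofReal (hF0.restrict)
      (Filter.Eventually.of_forall (wfun_add_nonneg s hσ))]
  -- total mass
  have hmass : ∫ x, (wfun s x + σ * gfun s x) ∂ν = cwv μ s + σ * cgv μ s := by
    have h := Fval μ ν hνint hmom s 0 σ
    simp only [pow_zero, one_mul] at h
    rwa [show (∫ _t, (1 : ℝ) ∂(μ 0)) = 1 by simp, one_mul] at h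
  have hc0 : 0 ≤ cwv μ s + σ * cgv μ s := by
    rw [← hmass]
    exact integral_nonneg (wfun_add_nonneg s hσ)
  have hρuniv : ρ Set.univ = ENNReal.ofReal (cwv μ s + σ * cgv μ s) := by
    rw [hρA Set.univ MeasurableSet.univ, Set.preimage_univ, setIntegral_univ, hmass]
  rcases eq_or_lt_of_le hc0 with hc | hc
  · -- total mass zero
    have h1 : ∫ x in (fun x : Fin (m + 1) → ℝ => x 0) ⁻¹' A,
        (wfun s x + σ * gfun s x) ∂ν ≤ 0 := by
      calc _ ≤ ∫ x, (wfun s x + σ * gfun s x) ∂ν :=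
            setIntegral_le_integral hF0 (Filter.Eventually.of_forall (wfun_add_nonneg s hσ))
        _ = 0 := by rw [hmass, ← hc]
    have h2 : 0 ≤ ∫ x in (fun x : Fin (m + 1) → ℝ => x 0) ⁻¹' A,
        (wfun s x + σ * gfun s x) ∂ν :=
      setIntegral_nonneg (hprm hA) fun x _ => wfun_add_nonneg s hσ x
    rw [← hc, zero_mul]
    linarith
  · -- positive mass case
    set c : ℝ := cwv μ s + σ * cgv μ s with hcdef
    have hcne : ENNReal.ofReal c ≠ 0 := by
      simp only [ne_eq, ENNReal.ofReal_eq_zero, not_le]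
      exact hc
    have hcnt : ENNReal.ofReal c ≠ ⊤ := ENNReal.ofReal_ne_top
    haveI hP : IsProbabilityMeasure ((ENNReal.ofReal c)⁻¹ • ρ) := by
      constructor
      rw [Measure.smul_apply, hρuniv, smul_eq_mul, ENNReal.inv_mul_cancel hcne hcnt]
    have hPint : ∀ k : ℕ, Integrable (fun t : ℝ => t ^ k) ((ENNReal.ofReal c)⁻¹ • ρ) :=
      fun k => (hρint k).smul_measure (ENNReal.inv_ne_top.mpr hcne)
    have hPmom : ∀ k : ℕ, ∫ t, t ^ k ∂((ENNReal.ofReal c)⁻¹ • ρ) = ∫ t, t ^ k ∂(μ 0) := by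
      intro k
      rw [integral_smul_measure, hρmom k, ENNReal.toReal_inv, ENNReal.toReal_ofReal hc.le,
        smul_eq_mul, mul_comm, mul_inv_cancel_right₀ (ne_of_gt hc)]
    have hPeq := hdet0 _ hP hPint hPmom
    have hρeq : ρ = (ENNReal.ofReal c) • μ 0 := by
      rw [← hPeq, smul_smul, ENNReal.mul_inv_cancel hcne hcnt, one_smul]
    have hAv := hρA A hA
    rw [hρeq, Measure.smul_apply, smul_eq_mul] at hAv
    have h2 : ENNReal.ofReal (c * (μ 0 A).toReal)
        = ENNReal.ofReal (∫ x in (fun x : Fin (m + 1) → ℝ => x 0) ⁻¹' A,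
            (wfun s x + σ * gfun s x) ∂ν) := by
      rw [ENNReal.ofReal_mul hc.le, ENNReal.ofReal_toReal (measure_ne_top _ _), hAv]
    have h3 := (ENNReal.ofReal_eq_ofReal_iff (by positivity)
      (setIntegral_nonneg (hprm hA) fun x _ => wfun_add_nonneg s hσ x)).mp h2
    exact h3.symm

lemma proj {m : ℕ} (μ : Fin (m + 1) → Measure ℝ) (hprob : ∀ i, IsProbabilityMeasure (μ i))
    (hdet0 : ∀ ρ : Measure ℝ, IsProbabilityMeasure ρ →
      (∀ k : ℕ, Integrable (fun x => x ^ k) ρ) →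
      (∀ k : ℕ, ∫ x, x ^ k ∂ρ = ∫ x, x ^ k ∂(μ 0)) → ρ = μ 0)
    (ν : Measure (Fin (m + 1) → ℝ)) (hν : IsProbabilityMeasure ν)
    (hνint : ∀ s : Fin (m + 1) → ℕ, Integrable (fun x => ∏ i, x i ^ s i) ν)
    (hmom : ∀ s : Fin (m + 1) → ℕ,
      ∫ x, ∏ i, x i ^ s i ∂ν = ∏ i, ∫ x, x ^ s i ∂(μ i))
    (s : Fin m → ℕ) (A : Set ℝ) (hA : MeasurableSet A) :
    ∫ x in (fun x : Fin (m + 1) → ℝ => x 0) ⁻¹' A, gfun s x ∂ν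
      = (μ 0 A).toReal * cgv μ s := by
  have h1 := key μ hprob hdet0 ν hν hνint hmom s 1 (by norm_num) A hA
  have h2 := key μ hprob hdet0 ν hν hνint hmom s (-1) (by norm_num) A hA
  have hgint : Integrable (gfun s) ν := by
    have h := hνint (Fin.cons 0 s)
    refine h.congr (Filter.Eventually.of_forall fun x => ?_)
    beta_reduce
    rw [← gmono s 0 x, pow_zero, one_mul]
  have hwint : Integrable (wfun s) ν := by
    have h := Fint ν hνint s 0 0
    refine h.congr (Filter.Eventually.of_forall fun x => ?_)
    simp
  have hi1 : Integrable (fun x => wfun s x + 1 * gfun s x)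
      (ν.restrict ((fun x : Fin (m + 1) → ℝ => x 0) ⁻¹' A)) :=
    hwint.restrict.add (hgint.restrict.const_mul 1)
  have hi2 : Integrable (fun x => wfun s x + (-1) * gfun s x)
      (ν.restrict ((fun x : Fin (m + 1) → ℝ => x 0) ⁻¹' A)) :=
    hwint.restrict.add (hgint.restrict.const_mul (-1))
  have h4 : ∫ x in (fun x : Fin (m + 1) → ℝ => x 0) ⁻¹' A, (2 : ℝ) * gfun s x ∂ν
      = (cwv μ s + 1 * cgv μ s) * (μ 0 A).toReal
        - (cwv μ s + (-1) * cgv μ s) * (μ 0 A).toReal := by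
    rw [← h1, ← h2, ← integral_sub hi1 hi2]
    refine integral_congr_ae (Filter.Eventually.of_forall fun x => ?_)
    ring
  rw [integral_const_mul] at h4
  have h5 : (cwv μ s + 1 * cgv μ s) * (μ 0 A).toReal
      - (cwv μ s + (-1) * cgv μ s) * (μ 0 A).toReal
      = 2 * ((μ 0 A).toReal * cgv μ s) := by ring
  linarith [h4, h5]

theorem aux : ∀ (m : ℕ) (μ : Fin m → Measure ℝ), (∀ i, IsProbabilityMeasure (μ i)) →
    (∀ (i : Fin m) (k : ℕ), Integrable (fun x => x ^ k) (μ i)) →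
    (∀ (i : Fin m) (ρ : Measure ℝ), IsProbabilityMeasure ρ →
      (∀ k : ℕ, Integrable (fun x => x ^ k) ρ) →
      (∀ k : ℕ, ∫ x, x ^ k ∂ρ = ∫ x, x ^ k ∂(μ i)) → ρ = μ i) →
    ∀ (ν : Measure (Fin m → ℝ)), IsProbabilityMeasure ν →
    (∀ s : Fin m → ℕ, Integrable (fun x => ∏ i, x i ^ s i) ν) →
    (∀ s : Fin m → ℕ, ∫ x, ∏ i, x i ^ s i ∂ν = ∏ i, ∫ x, x ^ s i ∂(μ i)) →
    ν = Measure.pi μ := by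
  intro m
  induction m with
  | zero =>
    intro μ hprob hint hdet ν hν hνint hmom
    haveI := fun i => hprob i
    haveI := hν
    refine (Measure.pi_eq fun t ht => ?_).symm
    have huniv : (Set.univ : Set (Fin 0)).pi t = Set.univ := by
      ext x
      simp
    rw [huniv]
    simp [measure_univ]
  | succ n ih =>
    intro μ hprob hint hdet ν hν hνint hmom
    haveI := fun i => hprob i
    haveI := hν
    have htlm : Measurable (fun (x : Fin (n + 1) → ℝ) (i : Fin n) => x i.succ) :=
      measurable_pi_lambda _ fun i => measurable_pi_apply i.succ
    have hprm : Measurable (fun x : Fin (n + 1) → ℝ => x 0) := measurable_pi_apply 0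
    have hgint : ∀ s : Fin n → ℕ, Integrable (gfun s) ν := fun s => by
      have h := hνint (Fin.cons 0 s)
      refine h.congr (Filter.Eventually.of_forall fun x => ?_)
      beta_reduce
      rw [← gmono s 0 x, pow_zero, one_mul]
    have hmonm : ∀ s : Fin n → ℕ, Measurable (fun y : Fin n → ℝ => ∏ i, y i ^ s i) :=
      fun s => Finset.measurable_prod _ fun i _ => (measurable_pi_apply i).pow_const _
    have hslab : ∀ A : Set ℝ, MeasurableSet A →
        ν ((fun x : Fin (n + 1) → ℝ => x 0) ⁻¹' A) = μ 0 A := by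
      intro A hA
      have h := proj μ hprob (hdet 0) ν hν hνint hmom (fun _ => 0) A hA
      simp only [gfun, cgv, pow_zero, Finset.prod_const_one, mul_one] at h
      rw [setIntegral_const, smul_eq_mul, mul_one] at h
      simp only [integral_const, measure_univ, ENNReal.toReal_one, smul_eq_mul, mul_one,
        Finset.prod_const_one, probReal_univ, measureReal_def] at h
      exact (ENNReal.toReal_eq_toReal_iff' (measure_ne_top _ _) (measure_ne_top _ _)).mp h
    refine (Measure.pi_eq fun t ht => ?_).symm
    have hpi : (Set.univ : Set (Fin (n + 1))).pi t
        = ((fun x : Fin (n + 1) → ℝ => x 0) ⁻¹' t 0)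
          ∩ ((fun (x : Fin (n + 1) → ℝ) (i : Fin n) => x i.succ) ⁻¹'
              (Set.univ.pi fun i : Fin n => t i.succ)) := by
      ext x
      simp only [Set.mem_pi, Set.mem_univ, true_implies, Set.mem_inter_iff, Set.mem_preimage]
      exact Fin.forall_fin_succ
    have hBm : MeasurableSet (Set.univ.pi fun i : Fin n => t i.succ) :=
      MeasurableSet.univ_pi fun i => ht i.succ
    have hν_pi : ν (Set.univ.pi t)
        = (Measure.map (fun (x : Fin (n + 1) → ℝ) (i : Fin n) => x i.succ)
            (ν.restrict ((fun x : Fin (n + 1) → ℝ => x 0) ⁻¹' t 0)))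
              (Set.univ.pi fun i : Fin n => t i.succ) := by
      rw [Measure.map_apply htlm hBm, Measure.restrict_apply (htlm hBm), hpi, Set.inter_comm]
    by_cases h0 : μ 0 (t 0) = 0
    · have hle : ν (Set.univ.pi t) ≤ ν ((fun x : Fin (n + 1) → ℝ => x 0) ⁻¹' t 0) :=
        measure_mono (by rw [hpi]; exact Set.inter_subset_left)
      rw [hslab (t 0) (ht 0), h0] at hle
      rw [le_antisymm hle zero_le, Fin.prod_univ_succ, h0, zero_mul]
    · have hfin : μ 0 (t 0) ≠ ⊤ := measure_ne_top _ _
      have hSν : ν ((fun x : Fin (n + 1) → ℝ => x 0) ⁻¹' t 0) = μ 0 (t 0) :=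
        hslab (t 0) (ht 0)
      have hcomp : ∀ s : Fin n → ℕ,
          ((fun y : Fin n → ℝ => ∏ i, y i ^ s i)
            ∘ (fun (x : Fin (n + 1) → ℝ) (i : Fin n) => x i.succ)) = gfun s := by
        intro s
        funext x
        simp [gfun, Function.comp]
      have hνAint : ∀ s : Fin n → ℕ, Integrable (fun y : Fin n → ℝ => ∏ i, y i ^ s i)
          (Measure.map (fun (x : Fin (n + 1) → ℝ) (i : Fin n) => x i.succ)
            (ν.restrict ((fun x : Fin (n + 1) → ℝ => x 0) ⁻¹' t 0))) := by
        intro s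
        rw [integrable_map_measure (hmonm s).aestronglyMeasurable htlm.aemeasurable, hcomp s]
        exact (hgint s).restrict
      have hνAmom : ∀ s : Fin n → ℕ,
          ∫ y, ∏ i, y i ^ s i
            ∂(Measure.map (fun (x : Fin (n + 1) → ℝ) (i : Fin n) => x i.succ)
              (ν.restrict ((fun x : Fin (n + 1) → ℝ => x 0) ⁻¹' t 0)))
          = (μ 0 (t 0)).toReal * cgv μ s := by
        intro s
        rw [integral_map htlm.aemeasurable (hmonm s).aestronglyMeasurable]
        calc ∫ x in (fun x : Fin (n + 1) → ℝ => x 0) ⁻¹' t 0,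
              (fun y : Fin n → ℝ => ∏ i, y i ^ s i)
                ((fun (x : Fin (n + 1) → ℝ) (i : Fin n) => x i.succ) x) ∂ν
            = ∫ x in (fun x : Fin (n + 1) → ℝ => x 0) ⁻¹' t 0, gfun s x ∂ν := by
              refine integral_congr_ae (Filter.Eventually.of_forall fun x => ?_)
              simp [gfun]
          _ = (μ 0 (t 0)).toReal * cgv μ s :=
              proj μ hprob (hdet 0) ν hν hνint hmom s (t 0) (ht 0)
      set νA : Measure (Fin n → ℝ) :=
        Measure.map (fun (x : Fin (n + 1) → ℝ) (i : Fin n) => x i.succ)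
          (ν.restrict ((fun x : Fin (n + 1) → ℝ => x 0) ⁻¹' t 0)) with hνA
      have hν'p : IsProbabilityMeasure ((μ 0 (t 0))⁻¹ • νA) := by
        constructor
        rw [Measure.smul_apply, hνA, Measure.map_apply htlm MeasurableSet.univ,
          Set.preimage_univ, Measure.restrict_apply MeasurableSet.univ, Set.univ_inter, hSν,
          smul_eq_mul, ENNReal.inv_mul_cancel h0 hfin]
      have hν'int : ∀ s : Fin n → ℕ, Integrable (fun y : Fin n → ℝ => ∏ i, y i ^ s i)
          ((μ 0 (t 0))⁻¹ • νA) := fun s =>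
        (hνAint s).smul_measure (ENNReal.inv_ne_top.mpr h0)
      have hν'mom : ∀ s : Fin n → ℕ,
          ∫ y, ∏ i, y i ^ s i ∂((μ 0 (t 0))⁻¹ • νA)
            = ∏ i, ∫ x, x ^ s i ∂(μ i.succ) := by
        intro s
        have hne : (μ 0 (t 0)).toReal ≠ 0 := ENNReal.toReal_ne_zero.mpr ⟨h0, hfin⟩
        rw [integral_smul_measure, hνAmom s, ENNReal.toReal_inv, smul_eq_mul, ← mul_assoc,
          inv_mul_cancel₀ hne, one_mul, cgv]
      have hIH := ih (fun i => μ i.succ) (fun i => hprob i.succ) (fun i => hint i.succ)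
        (fun i => hdet i.succ) _ hν'p hν'int hν'mom
      have hνAeq : νA = (μ 0 (t 0)) • Measure.pi (fun i => μ i.succ) := by
        rw [← hIH, smul_smul, ENNReal.mul_inv_cancel h0 hfin, one_smul]
      rw [hν_pi, hνAeq, Measure.smul_apply, smul_eq_mul, Measure.pi_pi,
        Fin.prod_univ_succ]

end Stmt10

/-- If `μ₁, ..., μ_m` are Borel probability measures on `ℝ`, each determined by its
moments, then the product measure on `ℝ^m` is determined by its mixed moments. -/
theorem stmt_10 {m : ℕ} (μ : Fin m → Measure ℝ) [∀ i, IsProbabilityMeasure (μ i)]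
    (hint : ∀ (i : Fin m) (k : ℕ), Integrable (fun x => x ^ k) (μ i))
    (hdet : ∀ (i : Fin m) (ρ : Measure ℝ), IsProbabilityMeasure ρ →
      (∀ k : ℕ, Integrable (fun x => x ^ k) ρ) →
      (∀ k : ℕ, ∫ x, x ^ k ∂ρ = ∫ x, x ^ k ∂(μ i)) → ρ = μ i)
    (ν : Measure (Fin m → ℝ)) [IsProbabilityMeasure ν]
    (hνint : ∀ s : Fin m → ℕ, Integrable (fun x => ∏ i, x i ^ s i) ν)
    (hmom : ∀ s : Fin m → ℕ,
      ∫ x, ∏ i, x i ^ s i ∂ν = ∏ i, ∫ x, x ^ s i ∂(μ i)) :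
    ν = Measure.pi μ := by
  exact Stmt10.aux m μ (fun i => inferInstance) hint hdet ν inferInstance hνint hmom
end
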